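/- Suppose f : ℝ → ℝ is differentiable and satisfies, for all s ≥ 0, the bound f(s)·f'(s) ≤ 2s/(1+s²), with f(0) = 0 and f ≥ 0 on [0,∞). Then for all s ≥ 0, f(s) ≤ √(2·log(1+s²)), and consequently f(s) ≤ √(2s²/√(1+s²)). -/

import Mathlib

lemma aux_log_le (y : ℝ) (hy : 1 ≤ y) : 2 * Real.log y ≤ y - 1/y := by
  set F : ℝ → ℝ := fun y => y - 1/y - 2 * Real.log y with hF
  have key : ∀ z : ℝ, 0 < z → HasDerivAt F (1 + (z^2)⁻¹ - 2 * z⁻¹) z := by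
    intro z hz
    have h1 : HasDerivAt (fun y : ℝ => y - 1/y) (1 - -(z^2)⁻¹) z := by
      simpa [one_div, Pi.sub_def] using (hasDerivAt_id z).sub (hasDerivAt_inv hz.ne')
    have h2 : HasDerivAt (fun y : ℝ => 2 * Real.log y) (2 * z⁻¹) z :=
      (Real.hasDerivAt_log hz.ne').const_mul 2
    have := h1.sub h2
    simpa [hF, one_div, sub_neg_eq_add, Pi.sub_def] using this
  have mono : MonotoneOn F (Set.Ici 1) := by
    apply monotoneOn_of_deriv_nonneg (convex_Ici 1)
    · intro z hz
      have hz1 : (1:ℝ) ≤ z := hz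
      exact ((key z (by linarith)).continuousAt).continuousWithinAt
    · intro z hz
      rw [interior_Ici] at hz
      exact ((key z (by linarith [hz.out])).differentiableAt).differentiableWithinAt
    · intro z hz
      rw [interior_Ici] at hz
      have hz0 : (0:ℝ) < z := by linarith [hz.out]
      rw [(key z hz0).deriv]
      have : 1 + (z^2)⁻¹ - 2 * z⁻¹ = (z-1)^2 / z^2 := by field_simp; ring
      rw [this]
      exact div_nonneg (sq_nonneg _) (by positivity)
  have := mono (Set.self_mem_Ici) (Set.mem_Ici.2 hy) hy
  simp only [hF] at this
  simp at this
  rw [one_div] at *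
  linarith [this]

theorem corrugation_amplitude_upper_bound (f : ℝ → ℝ)
    (hdiff : Differentiable ℝ f) (hf0 : f 0 = 0)
    (hnonneg : ∀ s, 0 ≤ s → 0 ≤ f s)
    (hbound : ∀ s, 0 ≤ s → f s * deriv f s ≤ 2*s/(1 + s^2)) :
    ∀ s, 0 ≤ s →
      f s ≤ Real.sqrt (2 * Real.log (1 + s^2)) ∧
      f s ≤ Real.sqrt (2*s^2 / Real.sqrt (1 + s^2)) := by
  have hxpos : ∀ s : ℝ, (0:ℝ) < 1 + s^2 := fun s => by positivity
  set g : ℝ → ℝ := fun s => 2 * Real.log (1 + s^2) - f s ^ 2 with hg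
  have key : ∀ s : ℝ, HasDerivAt g (2 * (2*s/(1+s^2)) - 2 * f s * deriv f s) s := by
    intro s
    have h1 : HasDerivAt (fun s : ℝ => 1 + s^2) (2*s) s := by
      simpa using (hasDerivAt_pow 2 s).const_add 1
    have h2 : HasDerivAt (fun s : ℝ => Real.log (1+s^2)) ((1+s^2)⁻¹ * (2*s)) s :=
      by have := (Real.hasDerivAt_log (hxpos s).ne').comp s h1; exact this
    have h3 : HasDerivAt (fun s : ℝ => f s ^ 2) (2 * f s * deriv f s) s := by
      simpa [Pi.pow_def] using ((hdiff s).hasDerivAt).pow 2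
    have := (h2.const_mul 2).sub h3
    simpa [div_eq_inv_mul, mul_assoc, Pi.sub_def] using this
  have mono : MonotoneOn g (Set.Ici 0) := by
    apply monotoneOn_of_deriv_nonneg (convex_Ici 0)
    · exact fun z _ => ((key z).continuousAt).continuousWithinAt
    · exact fun z _ => ((key z).differentiableAt).differentiableWithinAt
    · intro z hz
      rw [interior_Ici] at hz
      rw [(key z).deriv]
      have := hbound z (le_of_lt hz.out)
      linarith
  intro s hs
  have hkey : f s ^ 2 ≤ 2 * Real.log (1 + s^2) := by
    have := mono Set.self_mem_Ici (Set.mem_Ici.2 hs) hs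
    simp only [hg, hf0] at this
    simp at this
    linarith
  have h1 : f s ≤ Real.sqrt (2 * Real.log (1 + s^2)) :=
    Real.le_sqrt_of_sq_le hkey
  refine ⟨h1, h1.trans (Real.sqrt_le_sqrt ?_)⟩
  have hy : (1:ℝ) ≤ Real.sqrt (1 + s^2) :=
    (Real.le_sqrt zero_le_one (by positivity)).mpr (by nlinarith)
  have hy0 : (0:ℝ) < Real.sqrt (1 + s^2) := by linarith
  have hlog : Real.log (1 + s^2) = 2 * Real.log (Real.sqrt (1 + s^2)) := by
    rw [Real.log_sqrt (by positivity)]; ring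
  have := aux_log_le (Real.sqrt (1 + s^2)) hy
  have hsq : Real.sqrt (1 + s^2) ^ 2 = 1 + s^2 := Real.sq_sqrt (by positivity)
  rw [hlog]
  calc 2 * (2 * Real.log (Real.sqrt (1 + s^2))) ≤ 2 * (Real.sqrt (1 + s^2) - 1 / Real.sqrt (1 + s^2)) := by linarith
    _ = 2 * s^2 / Real.sqrt (1 + s^2) := by
        field_simp
        linarith [hsq]
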